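/- Let L satisfy (T1)-(T4) with root system R. Then for every non-isotropic α ∈ R and every β ∈ R, the Cartan integer 2(β,α)/(α,α) is an integer. -/

import Mathlib

open scoped Classical

namespace Gen

variable (F L : Type*) [Field F] [CharZero F] [LieRing L] [LieAlgebra F L]

/-- The weight space of a linear functional `α` on a subalgebra `H`. -/
def wt (H : LieSubalgebra F L) (α : Module.Dual F H) : Submodule F L where
  carrier := {x : L | ∀ h : H, ⁅(h : L), x⁆ = α h • x}
  add_mem' := by
    intro a b ha hb h
    rw [lie_add, ha h, hb h, smul_add]
  zero_mem' := by intro h; simp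
  smul_mem' := by
    intro c x hx h
    rw [lie_smul, hx h, smul_comm]

/-- Data for axioms (T1) and (T2): a non-degenerate symmetric invariant bilinear form,
a finite dimensional split toral subalgebra `H` on which the form is non-degenerate,
together with the representatives `t_α ∈ H` of linear functionals on `H`. -/
structure TData where
  B : L →ₗ[F] L →ₗ[F] F
  bsymm : ∀ x y, B x y = B y x
  binv : ∀ x y z, B ⁅x, y⁆ z = B x ⁅y, z⁆
  bnondeg : ∀ x, (∀ y, B x y = 0) → x = 0
  H : LieSubalgebra F L
  hne : H ≠ ⊥
  hfin : FiniteDimensional F H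
  hnondeg : ∀ h : H, (∀ h' : H, B h h' = 0) → h = 0
  decomp : DirectSum.IsInternal (wt F L H)
  t : Module.Dual F H → H
  tspec : ∀ (α : Module.Dual F H) (h : H), B (t α) h = α h

variable {F L}

namespace TData

variable (T : TData F L)

/-- The form transferred to the dual of `H`: `(α, β) = (t_α, t_β)`. -/
def pr (α β : Module.Dual F T.H) : F := T.B (T.t α) (T.t β)

/-- The root system `R = {α : L_α ≠ 0}`. -/
def R : Set (Module.Dual F T.H) := {α | wt F L T.H α ≠ ⊥}

/-- Non-isotropic roots. -/
def Rx : Set (Module.Dual F T.H) := {α | α ∈ T.R ∧ T.pr α α ≠ 0}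

/-- Isotropic roots. -/
def R0 : Set (Module.Dual F T.H) := {α | α ∈ T.R ∧ T.pr α α = 0}

/-- The core: the subalgebra generated by the non-isotropic root spaces. -/
def core : LieSubalgebra F L :=
  LieSubalgebra.lieSpan F L (⋃ α ∈ T.Rx, (wt F L T.H α : Set L))

end TData

variable (F L)

/-- A Lie algebra in the class 𝒯: axioms (T1)–(T6). -/
structure TAlg extends TData F L where
  t3a : ∀ δ ∈ toTData.R0, ∃ x ∈ wt F L toTData.H δ, ∃ y ∈ wt F L toTData.H (-δ),
          ⁅x, y⁆ = (toTData.t δ : L)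
  t3b : ∀ α ∈ toTData.Rx, ∀ x ∈ wt F L toTData.H α, x ≠ 0 →
          ∃ y ∈ wt F L toTData.H (-α), ⁅x, y⁆ = (toTData.t α : L)
  t4 : ∀ α ∈ toTData.Rx, ∀ x ∈ wt F L toTData.H α, ∀ y : L,
          ∃ n : ℕ, ((LieAlgebra.ad F L x) ^ n) y = 0
  t5a : ∀ S1 S2 : Set (Module.Dual F toTData.H), S1.Nonempty → S2.Nonempty →
          S1 ∪ S2 = toTData.Rx → Disjoint S1 S2 →
          ∃ a ∈ S1, ∃ b ∈ S2, toTData.pr a b ≠ 0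
  t5b : ∀ δ ∈ toTData.R0, ∃ α ∈ toTData.Rx, α + δ ∈ toTData.R
  t6free : Module.Free ℤ (AddSubgroup.closure toTData.R0)
  t6fin : Module.Finite ℤ (AddSubgroup.closure toTData.R0)

end Gen

/-- Auxiliary: the eigenvalue of a primitive vector is a natural number provided `f` acts
nilpotently on the vector (no finite-dimensionality assumption needed). -/
lemma sl2_exists_nat_of_nilpotent
    {R L M : Type*} [CommRing R] [IsDomain R] [CharZero R] [LieRing L] [LieAlgebra R L]
    [AddCommGroup M] [Module R M] [NoZeroSMulDivisors R M] [LieRingModule L M] [LieModule R L M]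
    {h e f : L} {t : IsSl2Triple h e f} {m : M} {μ : R}
    (P : t.HasPrimitiveVectorWith m μ)
    (hf : ∃ n : ℕ, ((LieModule.toEnd R L M f) ^ n) m = 0) :
    ∃ n : ℕ, μ = n := by
  obtain ⟨n, hn₁, hn₂⟩ := Nat.exists_not_and_succ_of_not_zero_of_exists
    (p := fun n => ((LieModule.toEnd R L M f) ^ n) m = 0) (by simpa using P.ne_zero) hf
  refine ⟨n, ?_⟩
  have := P.lie_e_pow_succ_toEnd_f n
  rw [hn₂, lie_zero, eq_comm, smul_eq_zero_iff_left hn₁, mul_eq_zero, sub_eq_zero] at this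
  exact this.resolve_left <| Nat.cast_add_one_ne_zero n

/-- Under axioms (T1)–(T4), for non-isotropic `α ∈ R` and any `β ∈ R`,
the Cartan integer `2(β,α)/(α,α)` is an integer. -/
theorem cartan_integer
    (F L : Type*) [Field F] [CharZero F] [LieRing L] [LieAlgebra F L]
    (T : Gen.TData F L)
    (t3a : ∀ δ ∈ T.R0, ∃ x ∈ Gen.wt F L T.H δ, ∃ y ∈ Gen.wt F L T.H (-δ),
        ⁅x, y⁆ = (T.t δ : L))
    (t3b : ∀ α ∈ T.Rx, ∀ x ∈ Gen.wt F L T.H α, x ≠ 0 →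
        ∃ y ∈ Gen.wt F L T.H (-α), ⁅x, y⁆ = (T.t α : L))
    (t4 : ∀ α ∈ T.Rx, ∀ x ∈ Gen.wt F L T.H α, ∀ y : L,
        ∃ n : ℕ, ((LieAlgebra.ad F L x) ^ n) y = 0)
    (α : Module.Dual F T.H) (hα : α ∈ T.Rx) (β : Module.Dual F T.H) (hβ : β ∈ T.R) :
    ∃ n : ℤ, 2 * T.pr β α = (n : F) * T.pr α α := by
    classical
  obtain ⟨hαR, hc⟩ := hα
  set c : F := T.pr α α with hc_def
  -- basic facts about t_α
  have htspec : ∀ γ : Module.Dual F T.H, ∀ h' : T.H, T.B (T.t γ) h' = γ h' := T.tspec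
  have hαtα : α (T.t α) = c := (T.tspec α (T.t α)).symm ▸ rfl
  have htα_ne : ((T.t α : L)) ≠ 0 := by
    intro h0
    have : T.t α = 0 := by exact_mod_cast h0
    rw [this, map_zero] at hαtα
    exact hc hαtα.symm
  -- pick a nonzero x in the α weight space
  obtain ⟨x, hx, hxne⟩ := (Submodule.ne_bot_iff _).mp hαR
  obtain ⟨y, hy, hxy⟩ := t3b α ⟨hαR, hc⟩ x hx hxne
  have hyne : y ≠ 0 := by
    intro h0; rw [h0, lie_zero] at hxy; exact htα_ne hxy.symm
  -- t(-α) = - t α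
  have htneg : (T.t (-α) : T.H) = -(T.t α) := by
    have hadd : T.t (-α) + T.t α = 0 := by
      apply T.hnondeg
      intro h'
      have h1 := T.tspec (-α) h'
      have h2 := T.tspec α h'
      have : ((T.t (-α) + T.t α : T.H) : L) = (T.t (-α) : L) + (T.t α : L) := rfl
      rw [this, map_add, LinearMap.add_apply, h1, h2]
      simp
    linear_combination (norm := module) hadd
  have hnegRx : -α ∈ T.Rx := by
    constructor
    · exact (Submodule.ne_bot_iff _).mpr ⟨y, hy, hyne⟩
    · show T.B (T.t (-α) : L) (T.t (-α) : L) ≠ 0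
      rw [htneg]
      simpa [hc_def, Gen.TData.pr] using hc
  -- the sl2 triple
  set e : L := x with he_def
  set f : L := (2 / c) • y with hf_def
  set h : L := (2 / c) • (T.t α : L) with hh_def
  have hcne : (2 / c : F) ≠ 0 := div_ne_zero two_ne_zero hc
  have hlie_tx : ⁅(T.t α : L), x⁆ = c • x := by rw [hx (T.t α), hαtα]
  have hlie_ty : ⁅(T.t α : L), y⁆ = (-c) • y := by
    have := hy (T.t α)
    rw [this]
    simp [hαtα]
  have triple : IsSl2Triple h e f := by
    refine ⟨smul_ne_zero hcne htα_ne, ?_, ?_, ?_⟩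
    · rw [he_def, hf_def, lie_smul, hxy, hh_def]
    · rw [hh_def, he_def, smul_lie, hlie_tx, smul_smul, div_mul_cancel₀ 2 hc, two_smul, two_smul]
    · rw [hh_def, hf_def, smul_lie, lie_smul, hlie_ty, smul_smul, smul_smul, two_smul, ← add_smul,
        ← neg_smul]
      congr 1
      field_simp
      ring
  -- pick a nonzero v in the β weight space
  obtain ⟨v, hv, hvne⟩ := (Submodule.ne_bot_iff _).mp hβ
  have hβtα : β (T.t α) = T.pr β α := (T.tspec β (T.t α)).symm ▸ rfl
  set μ0 : F := 2 * T.pr β α / c with hμ0_def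
  have hlie_hv : ⁅h, v⁆ = μ0 • v := by
    rw [hh_def, smul_lie, hv (T.t α), hβtα, smul_smul, hμ0_def]
    congr 1
    ring
  -- highest weight vector above v
  have key : ∀ k : ℕ, ⁅h, ((LieAlgebra.ad F L e) ^ k) v⁆
      = (μ0 + 2 * k) • ((LieAlgebra.ad F L e) ^ k) v := by
    intro k
    induction k with
    | zero => simpa using hlie_hv
    | succ k ih =>
      have hsucc : ((LieAlgebra.ad F L e) ^ (k + 1)) v
          = ⁅e, ((LieAlgebra.ad F L e) ^ k) v⁆ := by
        rw [pow_succ', Module.End.mul_apply]; rfl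
      rw [hsucc, leibniz_lie, triple.lie_h_e_smul F, smul_lie, ih, lie_smul, ← add_smul]
      push_cast
      ring_nf
  obtain ⟨N, hN⟩ := t4 α ⟨hαR, hc⟩ x hx v
  obtain ⟨m, hm1, hm2⟩ := Nat.exists_not_and_succ_of_not_zero_of_exists
    (p := fun k => ((LieAlgebra.ad F L e) ^ k) v = 0) (by simpa using hvne) ⟨N, hN⟩
  set w : L := ((LieAlgebra.ad F L e) ^ m) v with hw_def
  have P : triple.HasPrimitiveVectorWith w (μ0 + 2 * m) := by
    refine ⟨hm1, key m, ?_⟩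
    have hsucc : ((LieAlgebra.ad F L e) ^ (m + 1)) v = ⁅e, w⁆ := by
      rw [pow_succ', Module.End.mul_apply]; rfl
    rw [← hsucc, hm2]
  have hf_mem : f ∈ Gen.wt F L T.H (-α) := Submodule.smul_mem _ _ hy
  obtain ⟨n, hn⟩ := sl2_exists_nat_of_nilpotent P (t4 (-α) hnegRx f hf_mem w)
  refine ⟨(n : ℤ) - 2 * m, ?_⟩
  have hμ : μ0 = (n : F) - 2 * m := by linear_combination hn
  rw [hμ0_def] at hμ
  field_simp at hμ
  push_cast
  linear_combination hμ
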